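/- Let H be a graph, k ≥ 1, and suppose there exists a k-embedding i of a 3-regular tree T into H. Then H is of exponential growth; more precisely, for every vertex v of T and every natural number n, the number of vertices of H joined to i(v) by a path of length at most k·n is at least 3·(2^n − 1) + 1, so the ball of radius m around i(v) in H has at least 2^{⌊m/k⌋} vertices for every m. -/
import Mathlib

open SimpleGraph Set

section Aux

variable {V : Type*} {T : SimpleGraph V}

private lemma aux_dist_le_of_mem_support {v w x : V} (p : T.Walk v w) (hx : x ∈ p.support) :
    T.dist v x ≤ p.length := by
  classical
  exact le_trans (SimpleGraph.dist_le (p.takeUntil x hx)) (p.length_takeUntil_le hx)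

private lemma aux_concat_isPath {v u x : V} {p : T.Walk v u} (hp : p.IsPath)
    (h : T.Adj u x) (hx : x ∉ p.support) : (p.concat h).IsPath := by
  rw [← SimpleGraph.Walk.isPath_reverse_iff, SimpleGraph.Walk.reverse_concat]
  exact hp.reverse.cons (by simpa [SimpleGraph.Walk.support_reverse] using hx)

/-- In a tree, a vertex at distance `n+1` from `v` has at most one neighbour at
distance `n` from `v`. -/
private lemma down_unique (hconn : T.Connected) (hacyc : T.IsAcyclic) {v x u1 u2 : V} {n : ℕ}
    (hx : T.dist v x = n + 1) (h1 : T.Adj u1 x) (h2 : T.Adj u2 x)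
    (hd1 : T.dist v u1 = n) (hd2 : T.dist v u2 = n) : u1 = u2 := by
  obtain ⟨p1, hp1, hl1⟩ := hconn.exists_path_of_dist v u1
  obtain ⟨p2, hp2, hl2⟩ := hconn.exists_path_of_dist v u2
  have hx1 : x ∉ p1.support := fun h => by
    have := aux_dist_le_of_mem_support p1 h; omega
  have hx2 : x ∉ p2.support := fun h => by
    have := aux_dist_le_of_mem_support p2 h; omega
  have hq1 : (p1.concat h1).IsPath := aux_concat_isPath hp1 h1 hx1
  have hq2 : (p2.concat h2).IsPath := aux_concat_isPath hp2 h2 hx2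
  have := hacyc.path_unique ⟨p1.concat h1, hq1⟩ ⟨p2.concat h2, hq2⟩
  have heq : p1.concat h1 = p2.concat h2 := congrArg Subtype.val this
  obtain ⟨hv, -⟩ := SimpleGraph.Walk.concat_inj heq
  exact hv

/-- In a tree, two vertices at the same distance from `v` are not adjacent. -/
private lemma not_adj_same (hconn : T.Connected) (hacyc : T.IsAcyclic) {v u w : V} {n : ℕ}
    (hu : T.dist v u = n) (hw : T.dist v w = n) (hadj : T.Adj u w) : False := by
  classical
  obtain ⟨p, hp, hl⟩ := hconn.exists_path_of_dist v u
  by_cases hxs : w ∈ p.support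
  · have h1 : T.dist v w ≤ (p.takeUntil w hxs).length := SimpleGraph.dist_le _
    have h2 : (p.takeUntil w hxs).length + (p.dropUntil w hxs).length = p.length := by
      have h5 := congrArg SimpleGraph.Walk.length (p.take_spec hxs)
      rwa [SimpleGraph.Walk.length_append] at h5
    have h3 : (p.dropUntil w hxs).length = 0 := by omega
    have h4 : w = u := SimpleGraph.Walk.eq_of_length_eq_zero h3
    exact T.irrefl (h4 ▸ hadj)
  · obtain ⟨p', hp', hl'⟩ := hconn.exists_path_of_dist v w
    have hq : (p.concat hadj).IsPath := aux_concat_isPath hp hadj hxs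
    have := hacyc.path_unique ⟨p.concat hadj, hq⟩ ⟨p', hp'⟩
    have heq : (p.concat hadj).length = p'.length :=
      congrArg SimpleGraph.Walk.length (Subtype.mk_eq_mk.mp this)
    rw [SimpleGraph.Walk.length_concat] at heq
    omega

/-- In a 3-regular tree, every vertex at distance `n` from `v` has at least two
neighbours at distance `n+1` from `v`. -/
private lemma up_two (hconn : T.Connected) (hacyc : T.IsAcyclic)
    (hreg : ∀ v : V, (T.neighborSet v).ncard = 3) {v w : V} {n : ℕ}
    (hw : T.dist v w = n) :
    ∃ a b : V, a ≠ b ∧ T.Adj w a ∧ T.Adj w b ∧ T.dist v a = n + 1 ∧ T.dist v b = n + 1 := by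
  obtain ⟨a, b, c, hab, hac, hbc, hN⟩ := Set.ncard_eq_three.mp (hreg w)
  have hmem : ∀ x ∈ ({a, b, c} : Set V), T.Adj w x := fun x hx => by
    rw [← hN] at hx; exact hx
  have hadja : T.Adj w a := hmem a (by simp)
  have hadjb : T.Adj w b := hmem b (by simp)
  have hadjc : T.Adj w c := hmem c (by simp)
  rcases Nat.eq_zero_or_pos n with hn | hn
  · subst hn
    have hv : v = w := hconn.dist_eq_zero_iff.mp hw
    subst hv
    exact ⟨a, b, hab, hadja, hadjb,
      SimpleGraph.dist_eq_one_iff_adj.mpr hadja, SimpleGraph.dist_eq_one_iff_adj.mpr hadjb⟩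
  · obtain ⟨m, rfl⟩ : ∃ m, n = m + 1 := ⟨n - 1, by omega⟩
    have hP : ∀ x, T.Adj w x → T.dist v x = m ∨ T.dist v x = m + 2 := by
      intro x hx
      have e1 : T.dist w x = 1 := SimpleGraph.dist_eq_one_iff_adj.mpr hx
      have e2 : T.dist x w = 1 := SimpleGraph.dist_eq_one_iff_adj.mpr hx.symm
      have t1 : T.dist v x ≤ T.dist v w + T.dist w x := hconn.dist_triangle
      have t2 : T.dist v w ≤ T.dist v x + T.dist x w := hconn.dist_triangle
      have t3 : T.dist v x ≠ m + 1 := fun h => not_adj_same hconn hacyc h hw hx.symm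
      omega
    have hkey : ∀ x y : V, T.Adj w x → T.Adj w y → T.dist v x = m → T.dist v y = m → x = y :=
      fun x y hx hy hdx hdy => down_unique hconn hacyc hw hx.symm hy.symm hdx hdy
    by_cases ha : T.dist v a = m + 2
    · by_cases hb : T.dist v b = m + 2
      · exact ⟨a, b, hab, hadja, hadjb, ha, hb⟩
      · have hb' : T.dist v b = m := (hP b hadjb).resolve_right hb
        have hc : T.dist v c = m + 2 := by
          rcases hP c hadjc with h | h
          · exact absurd (hkey b c hadjb hadjc hb' h) hbc
          · exact h
        exact ⟨a, c, hac, hadja, hadjc, ha, hc⟩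
    · have ha' : T.dist v a = m := (hP a hadja).resolve_right ha
      have hb : T.dist v b = m + 2 := by
        rcases hP b hadjb with h | h
        · exact absurd (hkey a b hadja hadjb ha' h) hab
        · exact h
      have hc : T.dist v c = m + 2 := by
        rcases hP c hadjc with h | h
        · exact absurd (hkey a c hadja hadjc ha' h) hac
        · exact h
      exact ⟨b, c, hbc, hadjb, hadjc, hb, hc⟩

private lemma walk_transfer {W : Type*} {H : SimpleGraph W} {k : ℕ} {i : V → W}
    (hemb : ∀ v w : V, T.Adj v w → ∃ p : H.Walk (i v) (i w), p.length ≤ k)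
    {a b : V} (p : T.Walk a b) : ∃ q : H.Walk (i a) (i b), q.length ≤ k * p.length := by
  induction p with
  | nil => exact ⟨.nil, by simp⟩
  | cons h p ih =>
    obtain ⟨q1, hq1⟩ := hemb _ _ h
    obtain ⟨q2, hq2⟩ := ih
    refine ⟨q1.append q2, ?_⟩
    rw [SimpleGraph.Walk.length_append, SimpleGraph.Walk.length_cons]
    have : k * (p.length + 1) = k * p.length + k := by ring
    omega

end Aux

/-- If there is a `k`-embedding (`k ≥ 1`) of a 3-regular tree `T` into a graph `H`,
then `H` is of exponential growth: for every vertex `v` of `T`, the ball of radius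
`k * n` around `i v` in `H` contains at least `3 * (2 ^ n - 1) + 1` vertices, and
hence the ball of radius `m` around `i v` contains at least `2 ^ (m / k)` vertices. -/
theorem kEmbedding_threeRegularTree_exponential_growth {V W : Type*}
    (T : SimpleGraph V) (H : SimpleGraph W)
    (hconn : T.Connected) (hacyc : T.IsAcyclic)
    (hreg : ∀ v : V, (T.neighborSet v).ncard = 3)
    (k : ℕ) (hk : 1 ≤ k) (i : V → W) (hinj : Function.Injective i)
    (hemb : ∀ v w : V, T.Adj v w → ∃ p : H.Walk (i v) (i w), p.length ≤ k) :
    ∀ v : V,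
      (∀ n : ℕ, ((3 * (2 ^ n - 1) + 1 : ℕ) : ℕ∞) ≤
          {u : W | ∃ p : H.Walk (i v) u, p.length ≤ k * n}.encard) ∧
      (∀ m : ℕ, ((2 ^ (m / k) : ℕ) : ℕ∞) ≤
          {u : W | ∃ p : H.Walk (i v) u, p.length ≤ m}.encard) := by
  intro v
  -- spheres grow at least geometrically
  have key1 : ∀ n : ℕ, ((3 * 2 ^ n : ℕ) : ℕ∞) ≤ {w : V | T.dist v w = n + 1}.encard := by
    intro n
    induction n with
    | zero =>
      have h1 : {w : V | T.dist v w = 1} = T.neighborSet v := by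
        ext w; simp [SimpleGraph.dist_eq_one_iff_adj, SimpleGraph.mem_neighborSet]
      obtain ⟨a, b, c, hab, hac, hbc, hN⟩ := Set.ncard_eq_three.mp (hreg v)
      rw [h1, hN, Set.encard_insert_of_notMem (by simp [hab, hac]),
        Set.encard_insert_of_notMem (by simp [hbc]), Set.encard_singleton]
      norm_num
    | succ n ih =>
      set S1 := {w : V | T.dist v w = n + 1} with hS1
      set S2 := {w : V | T.dist v w = n + 2} with hS2
      have hup : ∀ w : V, ∃ ab : V × V, T.dist v w = n + 1 →
          ab.1 ≠ ab.2 ∧ T.Adj w ab.1 ∧ T.Adj w ab.2 ∧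
            T.dist v ab.1 = n + 2 ∧ T.dist v ab.2 = n + 2 := by
        intro w
        by_cases hw : T.dist v w = n + 1
        · obtain ⟨a, b, h⟩ := up_two hconn hacyc hreg hw
          exact ⟨(a, b), fun _ => h⟩
        · exact ⟨(w, w), fun h => absurd h hw⟩
      choose F hF using hup
      set f0 : V → V := fun w => (F w).1 with hf0
      set f1 : V → V := fun w => (F w).2 with hf1
      have hdown : ∀ x w1 w2 : V, T.dist v x = n + 2 → T.Adj w1 x → T.Adj w2 x →
          T.dist v w1 = n + 1 → T.dist v w2 = n + 1 → w1 = w2 :=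
        fun x w1 w2 hx h1 h2 hd1 hd2 => down_unique hconn hacyc hx h1 h2 hd1 hd2
      have hinj0 : Set.InjOn f0 S1 := by
        intro w1 hw1 w2 hw2 heq
        obtain ⟨-, ha1, -, hd1, -⟩ := hF w1 hw1
        obtain ⟨-, ha2, -, hd2, -⟩ := hF w2 hw2
        exact hdown (f0 w1) w1 w2 hd1 ha1 (heq ▸ ha2) hw1 hw2
      have hinj1 : Set.InjOn f1 S1 := by
        intro w1 hw1 w2 hw2 heq
        obtain ⟨-, -, ha1, -, hd1⟩ := hF w1 hw1
        obtain ⟨-, -, ha2, -, hd2⟩ := hF w2 hw2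
        exact hdown (f1 w1) w1 w2 hd1 ha1 (heq ▸ ha2) hw1 hw2
      have hsub : f0 '' S1 ∪ f1 '' S1 ⊆ S2 := by
        rintro x (⟨w, hw, rfl⟩ | ⟨w, hw, rfl⟩)
        · exact (hF w hw).2.2.2.1
        · exact (hF w hw).2.2.2.2
      have hdisj : Disjoint (f0 '' S1) (f1 '' S1) := by
        rw [Set.disjoint_left]
        rintro x ⟨w1, hw1, rfl⟩ ⟨w2, hw2, hx⟩
        obtain ⟨hne1, ha1, -, hd1, -⟩ := hF w1 hw1
        obtain ⟨-, -, ha2, -, hd2⟩ := hF w2 hw2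
        have : w1 = w2 := hdown (f0 w1) w1 w2 hd1 ha1 (hx ▸ ha2) hw1 hw2
        exact hne1 (this ▸ hx.symm)
      calc ((3 * 2 ^ (n + 1) : ℕ) : ℕ∞)
          = ((3 * 2 ^ n : ℕ) : ℕ∞) + ((3 * 2 ^ n : ℕ) : ℕ∞) := by push_cast; ring
        _ ≤ (f0 '' S1).encard + (f1 '' S1).encard := by
            rw [hinj0.encard_image, hinj1.encard_image]; exact add_le_add ih ih
        _ = (f0 '' S1 ∪ f1 '' S1).encard := (Set.encard_union_eq hdisj).symm
        _ ≤ S2.encard := Set.encard_mono hsub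
  -- balls in the tree
  have key2 : ∀ n : ℕ, ((3 * (2 ^ n - 1) + 1 : ℕ) : ℕ∞) ≤ {w : V | T.dist v w ≤ n}.encard := by
    intro n
    induction n with
    | zero =>
      have h1 : ({v} : Set V) ⊆ {w : V | T.dist v w ≤ 0} := by
        intro x hx; rw [Set.mem_singleton_iff] at hx; subst hx
        simp [SimpleGraph.dist_self]
      have := Set.encard_mono h1
      rw [Set.encard_singleton] at this
      simpa using this
    | succ n ih =>
      have hsub : {w : V | T.dist v w ≤ n} ∪ {w : V | T.dist v w = n + 1}
          ⊆ {w : V | T.dist v w ≤ n + 1} := by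
        rintro x (hx | hx) <;> simp only [Set.mem_setOf_eq] at * <;> omega
      have hdisj : Disjoint {w : V | T.dist v w ≤ n} {w : V | T.dist v w = n + 1} := by
        rw [Set.disjoint_left]
        intro x hx hx'
        simp only [Set.mem_setOf_eq] at hx hx'
        omega
      have hpow : 1 ≤ 2 ^ n := Nat.one_le_two_pow
      have hnat : (3 * (2 ^ (n + 1) - 1) + 1 : ℕ) = (3 * (2 ^ n - 1) + 1) + 3 * 2 ^ n := by
        have : 2 ^ (n + 1) = 2 * 2 ^ n := by ring
        omega
      calc ((3 * (2 ^ (n + 1) - 1) + 1 : ℕ) : ℕ∞)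
          = ((3 * (2 ^ n - 1) + 1 : ℕ) : ℕ∞) + ((3 * 2 ^ n : ℕ) : ℕ∞) := by
            rw [hnat]; push_cast; ring
        _ ≤ {w : V | T.dist v w ≤ n}.encard + {w : V | T.dist v w = n + 1}.encard :=
            add_le_add ih (key1 n)
        _ = ({w : V | T.dist v w ≤ n} ∪ {w : V | T.dist v w = n + 1}).encard :=
            (Set.encard_union_eq hdisj).symm
        _ ≤ _ := Set.encard_mono hsub
  -- transfer to H
  have hball : ∀ n : ℕ, ((3 * (2 ^ n - 1) + 1 : ℕ) : ℕ∞) ≤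
      {u : W | ∃ p : H.Walk (i v) u, p.length ≤ k * n}.encard := by
    intro n
    have hsub : i '' {w : V | T.dist v w ≤ n}
        ⊆ {u : W | ∃ p : H.Walk (i v) u, p.length ≤ k * n} := by
      rintro _ ⟨w, hw, rfl⟩
      obtain ⟨p, hp⟩ := hconn.exists_walk_length_eq_dist v w
      obtain ⟨q, hq⟩ := walk_transfer hemb p
      exact ⟨q, hq.trans (Nat.mul_le_mul_left k (by simp only [Set.mem_setOf_eq] at hw; omega))⟩
    calc ((3 * (2 ^ n - 1) + 1 : ℕ) : ℕ∞)
        ≤ {w : V | T.dist v w ≤ n}.encard := key2 n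
      _ = (i '' {w : V | T.dist v w ≤ n}).encard := (hinj.injOn.encard_image).symm
      _ ≤ _ := Set.encard_mono hsub
  refine ⟨hball, fun m => ?_⟩
  have hsub : {u : W | ∃ p : H.Walk (i v) u, p.length ≤ k * (m / k)}
      ⊆ {u : W | ∃ p : H.Walk (i v) u, p.length ≤ m} := by
    rintro x ⟨p, hp⟩
    exact ⟨p, hp.trans (by rw [Nat.mul_comm]; exact Nat.div_mul_le_self m k)⟩
  have hpow : 1 ≤ 2 ^ (m / k) := Nat.one_le_two_pow
  have hcast : ((2 ^ (m / k) : ℕ) : ℕ∞) ≤ ((3 * (2 ^ (m / k) - 1) + 1 : ℕ) : ℕ∞) :=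
    Nat.cast_le.mpr (by omega)
  exact hcast.trans ((hball (m / k)).trans (Set.encard_mono hsub))
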